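/- Let p be a prime with p ≡ 3 (mod 4) and let a, b, c, d ∈ ZMod p with a ≠ c and b ≠ d. Then (2·a² − 2·c²)/((a − c)²) = (2·(a² + b²) − 2·(c² + d²))/((a − c)² + (b − d)²) if and only if b·c = a·d. -/
import Mathlib


/-- the chain of equivalences in the proof of Lemma 1 of the paper. -/
theorem stmt_8 (p : ℕ) [Fact p.Prime] (hp : p % 4 = 3)
    (a b c d : ZMod p) (hac : a ≠ c) (hbd : b ≠ d) :
    (2 * a ^ 2 - 2 * c ^ 2) / ((a - c) ^ 2) =
        (2 * (a ^ 2 + b ^ 2) - 2 * (c ^ 2 + d ^ 2)) / ((a - c) ^ 2 + (b - d) ^ 2) ↔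
      b * c = a * d := by
  have hu : a - c ≠ 0 := sub_ne_zero.mpr hac
  have hv : b - d ≠ 0 := sub_ne_zero.mpr hbd
  have h2 : (2 : ZMod p) ≠ 0 := by
    have hne : ¬ (p ∣ 2) := by
      intro h
      have h2le := (Fact.out : p.Prime).two_le
      have := Nat.le_of_dvd (by norm_num) h
      omega
    simpa using (ZMod.natCast_eq_zero_iff 2 p).not.mpr hne
  have h4 : (4 : ZMod p) * (a - c) * (b - d) ≠ 0 := by
    have : (4 : ZMod p) = 2 * 2 := by norm_num
    exact mul_ne_zero (mul_ne_zero (this ▸ mul_ne_zero h2 h2) hu) hv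
  have hden1 : ((a - c) ^ 2 : ZMod p) ≠ 0 := pow_ne_zero _ hu
  have hden : (a - c) ^ 2 + (b - d) ^ 2 ≠ 0 := by
    intro h
    have hsq : ((b - d) / (a - c)) ^ 2 = -1 := by
      field_simp
      linear_combination h
    have : IsSquare (-1 : ZMod p) := ⟨(b - d) / (a - c), by rw [← hsq]; ring⟩
    exact (ZMod.exists_sq_eq_neg_one_iff.mp this) hp
  rw [div_eq_div_iff hden1 hden]
  constructor
  · intro h
    exact mul_left_cancel₀ h4 (by linear_combination h)
  · intro h
    linear_combination (4 * (a - c) * (b - d)) * h
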